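/- arXiv:1512.00890 — 3 statements merged into one kernel-verified Lean document; each statement's English description precedes it below -/
import Mathlib

section
/- Let a < b be real numbers, let N ≥ 2 be an even natural number, set x_k = a + k·(b−a)/N for k = 0, 1, …, N, and let f : ℝ → ℝ be four times continuously differentiable on [a,b] with |f⁗(x)| ≤ M for all x ∈ [a,b]. Then the composite Simpson approximation satisfies |∫_a^b f(x) dx − ∑_{ℓ=1}^{N/2} ((b−a)/(3N))·( f(x_{2ℓ−2}) + 4·f(x_{2ℓ−1}) + f(x_{2ℓ}) )| ≤ M·(b−a)^5 / (180·N^4). In particular the error of composite Simpson's rule is O(N^{−4}) for functions with bounded fourth derivative. -/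
open MeasureTheory Finset Set

lemma simpson_bound_aux {h : ℝ} (hh : 0 < h) (g B g' B' : ℝ → ℝ)
    (hg : ContinuousOn g (Set.Icc 0 h)) (hB : ContinuousOn B (Set.Icc 0 h))
    (hgd : ∀ t ∈ Set.Ioo 0 h, HasDerivAt g (g' t) t)
    (hBd : ∀ t ∈ Set.Ioo 0 h, HasDerivAt B (B' t) t)
    (hle : ∀ t ∈ Set.Ioo 0 h, |g' t| ≤ B' t)
    (hg0 : g 0 = 0) (hB0 : B 0 = 0) :
    ∀ t ∈ Set.Icc 0 h, |g t| ≤ B t := by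
  intro t ht
  have key : ∀ (φ φ' : ℝ → ℝ), ContinuousOn φ (Set.Icc 0 h) →
      (∀ s ∈ Set.Ioo 0 h, HasDerivAt φ (φ' s) s) →
      (∀ s ∈ Set.Ioo 0 h, 0 ≤ φ' s) → φ 0 ≤ φ t := by
    intro φ φ' hφc hφd hφ0
    have hm : MonotoneOn φ (Set.Icc 0 h) := by
      apply monotoneOn_of_deriv_nonneg (convex_Icc 0 h) hφc
      · rw [interior_Icc]
        exact fun s hs => ((hφd s hs).differentiableAt).differentiableWithinAt
      · rw [interior_Icc]
        intro s hs; rw [(hφd s hs).deriv]; exact hφ0 s hs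
    exact hm (Set.left_mem_Icc.2 hh.le) ht ht.1
  have h1 := key (fun s => B s - g s) (fun s => B' s - g' s)
      (hB.sub hg) (fun s hs => (hBd s hs).sub (hgd s hs))
      (fun s hs => by have := (abs_le.1 (hle s hs)).2; linarith)
  have h2 := key (fun s => B s + g s) (fun s => B' s + g' s)
      (hB.add hg) (fun s hs => (hBd s hs).add (hgd s hs))
      (fun s hs => by have := (abs_le.1 (hle s hs)).1; linarith)
  rw [hg0, hB0] at h1 h2
  rw [abs_le]; constructor <;> linarith

lemma simpson_single (a b : ℝ) (f : ℝ → ℝ) (M : ℝ)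
    (hf : ContDiffOn ℝ 4 f (Set.Icc a b))
    (hM : ∀ y ∈ Set.Icc a b, |iteratedDerivWithin 4 f (Set.Icc a b) y| ≤ M)
    (c h : ℝ) (hh : 0 < h)
    (hsub : Set.Icc (c - h) (c + h) ⊆ Set.Icc a b) :
    |(∫ y in (c - h)..(c + h), f y) - h / 3 * (f (c - h) + 4 * f c + f (c + h))|
      ≤ M * h ^ 5 / 90 := by
  have hend1 := hsub (Set.left_mem_Icc.2 (by linarith))
  have hend2 := hsub (Set.right_mem_Icc.2 (by linarith))
  rw [Set.mem_Icc] at hend1 hend2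
  have hab : a < b := by linarith [hend1.1, hend2.2]
  set s : Set ℝ := Set.Icc a b with hsdef
  have huds : UniqueDiffOn ℝ s := uniqueDiffOn_Icc hab
  set g : ℕ → ℝ → ℝ := fun i => iteratedDerivWithin i f s with hgdef
  have hg0 : ∀ y, g 0 y = f y := fun y => by simp [hgdef]
  have hmem : ∀ t ∈ Set.Icc 0 h, c + t ∈ s ∧ c - t ∈ s := by
    intro t ht
    constructor <;> apply hsub <;> rw [Set.mem_Icc] <;>
      constructor <;> linarith [ht.1, ht.2]
  have hc_mem : c ∈ s := by
    have := (hmem 0 (Set.left_mem_Icc.2 hh.le)).1; simpa using this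
  have hIoo : ∀ t ∈ Set.Ioo 0 h, c + t ∈ Set.Ioo a b ∧ c - t ∈ Set.Ioo a b := by
    intro t ht
    exact ⟨⟨by linarith [hend1.1, ht.1, ht.2], by linarith [hend2.2, ht.1, ht.2]⟩,
           ⟨by linarith [hend1.1, ht.1, ht.2], by linarith [hend2.2, ht.1, ht.2]⟩⟩
  have hfc : ContinuousOn f s := hf.continuousOn
  have hM0 : 0 ≤ M := (abs_nonneg _).trans (hM c hc_mem)
  have gcont : ∀ i : ℕ, i ≤ 4 → ContinuousOn (g i) s := by
    intro i hi
    rw [hgdef]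
    exact hf.continuousOn_iteratedDerivWithin (by exact_mod_cast hi) huds
  -- derivatives of the iterated derivatives
  have gdW : ∀ i : ℕ, i < 4 → ∀ y ∈ s, HasDerivWithinAt (g i) (g (i + 1) y) s y := by
    intro i hi y hy
    have hd : DifferentiableWithinAt ℝ (g i) s y := by
      rw [hgdef]
      exact (hf.differentiableOn_iteratedDerivWithin (by exact_mod_cast hi) huds) y hy
    have h4 : g (i + 1) y = derivWithin (g i) s y := by
      rw [hgdef]; exact congrFun iteratedDerivWithin_succ y
    rw [h4]; exact hd.hasDerivWithinAt
  have gdAt : ∀ i : ℕ, i < 4 → ∀ y ∈ Set.Ioo a b, HasDerivAt (g i) (g (i + 1) y) y := by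
    intro i hi y hy
    exact (gdW i hi y (Set.Ioo_subset_Icc_self hy)).hasDerivAt
      (Icc_mem_nhds hy.1 hy.2)
  have hplus : ∀ i : ℕ, i < 4 → ∀ t ∈ Set.Ioo 0 h,
      HasDerivAt (fun u => g i (c + u)) (g (i + 1) (c + t)) t := by
    intro i hi t ht
    have := (gdAt i hi (c + t) (hIoo t ht).1).comp t ((hasDerivAt_id t).const_add c)
    simpa [Function.comp_def] using this
  have hminus : ∀ i : ℕ, i < 4 → ∀ t ∈ Set.Ioo 0 h,
      HasDerivAt (fun u => g i (c - u)) (-g (i + 1) (c - t)) t := by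
    intro i hi t ht
    have := (gdAt i hi (c - t) (by simpa [sub_eq_add_neg] using (hIoo t ht).2)).comp t
      (((hasDerivAt_id t).neg).const_add c)
    simpa [Function.comp_def, sub_eq_add_neg, mul_comm] using this
  -- interval integrability
  have hfInt : ∀ u v, u ∈ s → v ∈ s → IntervalIntegrable f volume u v := by
    intro u v hu hv
    apply ContinuousOn.intervalIntegrable
    apply hfc.mono
    rw [hsdef] at hu hv ⊢
    calc Set.uIcc u v ⊆ Set.uIcc a b :=
          Set.uIcc_subset_uIcc (by rw [Set.uIcc_of_le hab.le]; exact hu)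
            (by rw [Set.uIcc_of_le hab.le]; exact hv)
      _ = Set.Icc a b := Set.uIcc_of_le hab.le
  -- continuity of the primitive
  have hIcont : ContinuousOn (fun u : ℝ => ∫ y in c..u, f y) s := by
    have h1 : IntervalIntegrable f volume a b :=
      hfInt a b (by rw [hsdef]; exact Set.left_mem_Icc.2 hab.le)
        (by rw [hsdef]; exact Set.right_mem_Icc.2 hab.le)
    have h2 := intervalIntegral.continuousOn_primitive_interval' h1
      (by rw [Set.uIcc_of_le hab.le]; exact hc_mem)
    rw [Set.uIcc_of_le hab.le] at h2
    exact h2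
  -- derivative of the primitive at interior points
  have hprim : ∀ y ∈ Set.Ioo a b, HasDerivAt (fun u : ℝ => ∫ z in c..u, f z) (f y) y := by
    intro y hy
    have hys : y ∈ s := Set.Ioo_subset_Icc_self hy
    refine intervalIntegral.integral_hasDerivAt_right (hfInt c y hc_mem hys) ?_ ?_
    · exact (hfc.mono Set.Ioo_subset_Icc_self).stronglyMeasurableAtFilter isOpen_Ioo y hy
    · exact (hfc y hys).continuousAt (Icc_mem_nhds hy.1 hy.2)
  -- splitting of the symmetric integral
  have hsplit : ∀ t ∈ Set.Icc 0 h, (∫ y in (c - t)..(c + t), f y)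
      = (∫ y in c..(c + t), f y) - (∫ y in c..(c - t), f y) := by
    intro t ht
    rw [← intervalIntegral.integral_add_adjacent_intervals
      (hfInt (c - t) c (hmem t ht).2 hc_mem) (hfInt c (c + t) hc_mem (hmem t ht).1),
      intervalIntegral.integral_symm c (c - t)]
    ring
  -- continuity of composed maps
  have hcp : ∀ i : ℕ, i ≤ 4 → ContinuousOn (fun t => g i (c + t)) (Set.Icc 0 h) :=
    fun i hi => (gcont i hi).comp (continuous_const.add continuous_id).continuousOn
      (fun t ht => (hmem t ht).1)
  have hcm : ∀ i : ℕ, i ≤ 4 → ContinuousOn (fun t => g i (c - t)) (Set.Icc 0 h) :=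
    fun i hi => (gcont i hi).comp (continuous_const.sub continuous_id).continuousOn
      (fun t ht => (hmem t ht).2)
  have hfcp : ContinuousOn (fun t => f (c + t)) (Set.Icc 0 h) := by
    have := hcp 0 (by norm_num); simpa only [hg0] using this
  have hfcm : ContinuousOn (fun t => f (c - t)) (Set.Icc 0 h) := by
    have := hcm 0 (by norm_num); simpa only [hg0] using this
  -- the error function and its derivatives
  have hFcont : ContinuousOn (fun t => (∫ y in (c - t)..(c + t), f y)
      - t / 3 * (f (c - t) + 4 * f c + f (c + t))) (Set.Icc 0 h) := by
    apply ContinuousOn.congr (f := fun t => ((∫ y in c..(c + t), f y)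
      - (∫ y in c..(c - t), f y)) - t / 3 * (f (c - t) + 4 * f c + f (c + t)))
    · apply ContinuousOn.sub
      · exact (hIcont.comp (continuous_const.add continuous_id).continuousOn
          (fun t ht => (hmem t ht).1)).sub
          (hIcont.comp (continuous_const.sub continuous_id).continuousOn
          (fun t ht => (hmem t ht).2))
      · exact (continuousOn_id.div_const 3).mul
          ((hfcm.add continuousOn_const).add hfcp)
    · intro t ht; dsimp only; rw [hsplit t ht]
  have hF1cont : ContinuousOn (fun t => 2/3 * (f (c + t) + f (c - t)) - 4/3 * f c
      - t/3 * (g 1 (c + t) - g 1 (c - t))) (Set.Icc 0 h) := by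
    apply ContinuousOn.sub
    · exact (continuousOn_const.mul (hfcp.add hfcm)).sub continuousOn_const
    · exact (continuousOn_id.div_const 3).mul
        ((hcp 1 (by norm_num)).sub (hcm 1 (by norm_num)))
  have hF2cont : ContinuousOn (fun t => 1/3 * (g 1 (c + t) - g 1 (c - t))
      - t/3 * (g 2 (c + t) + g 2 (c - t))) (Set.Icc 0 h) := by
    apply ContinuousOn.sub
    · exact continuousOn_const.mul ((hcp 1 (by norm_num)).sub (hcm 1 (by norm_num)))
    · exact (continuousOn_id.div_const 3).mul
        ((hcp 2 (by norm_num)).add (hcm 2 (by norm_num)))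
  have hfp' : ∀ t ∈ Set.Ioo 0 h, HasDerivAt (fun u => f (c + u)) (g 1 (c + t)) t := by
    intro t ht
    have := hplus 0 (by norm_num) t ht; simpa only [hg0] using this
  have hfm' : ∀ t ∈ Set.Ioo 0 h, HasDerivAt (fun u => f (c - u)) (-g 1 (c - t)) t := by
    intro t ht
    have := hminus 0 (by norm_num) t ht; simpa only [hg0] using this
  have hFd : ∀ t ∈ Set.Ioo 0 h,
      HasDerivAt (fun t => (∫ y in (c - t)..(c + t), f y)
        - t / 3 * (f (c - t) + 4 * f c + f (c + t)))
      (2/3 * (f (c + t) + f (c - t)) - 4/3 * f c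
        - t/3 * (g 1 (c + t) - g 1 (c - t))) t := by
    intro t ht
    have hI : HasDerivAt (fun u => ∫ y in c..(c + u), f y) (f (c + t)) t := by
      have := (hprim (c + t) (hIoo t ht).1).comp t ((hasDerivAt_id t).const_add c)
      simpa [Function.comp_def] using this
    have hJ : HasDerivAt (fun u => ∫ y in c..(c - u), f y) (-f (c - t)) t := by
      have := (hprim (c - t) (by simpa [sub_eq_add_neg] using (hIoo t ht).2)).comp t
        (((hasDerivAt_id t).neg).const_add c)
      simpa [Function.comp_def, sub_eq_add_neg, mul_comm] using this
    have hD : HasDerivAt (fun u => ((∫ y in c..(c + u), f y) - (∫ y in c..(c - u), f y))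
        - u / 3 * (f (c - u) + 4 * f c + f (c + u)))
        (2/3 * (f (c + t) + f (c - t)) - 4/3 * f c
          - t/3 * (g 1 (c + t) - g 1 (c - t))) t := by
      have := (hI.sub hJ).sub (((hasDerivAt_id t).div_const 3).mul
        (((hfm' t ht).add (hasDerivAt_const t (4 * f c))).add (hfp' t ht)))
      refine this.congr_deriv ?_
      simp only [id, Pi.add_apply]
      ring
    apply hD.congr_of_eventuallyEq
    filter_upwards [Ioo_mem_nhds ht.1 ht.2] with u hu
    rw [hsplit u (Set.Ioo_subset_Icc_self hu)]
  have hF1d : ∀ t ∈ Set.Ioo 0 h,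
      HasDerivAt (fun t => 2/3 * (f (c + t) + f (c - t)) - 4/3 * f c
        - t/3 * (g 1 (c + t) - g 1 (c - t)))
      (1/3 * (g 1 (c + t) - g 1 (c - t)) - t/3 * (g 2 (c + t) + g 2 (c - t))) t := by
    intro t ht
    have := ((((hfp' t ht).add (hfm' t ht)).const_mul (2/3 : ℝ)).sub
        (hasDerivAt_const t (4/3 * f c))).sub
      (((hasDerivAt_id t).div_const 3).mul
        ((hplus 1 (by norm_num) t ht).sub (hminus 1 (by norm_num) t ht)))
    refine this.congr_deriv ?_
    simp only [id, Pi.add_apply, Pi.sub_apply]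
    ring
  have hF2d : ∀ t ∈ Set.Ioo 0 h,
      HasDerivAt (fun t => 1/3 * (g 1 (c + t) - g 1 (c - t))
        - t/3 * (g 2 (c + t) + g 2 (c - t)))
      (-(t / 3 * (g 3 (c + t) - g 3 (c - t)))) t := by
    intro t ht
    have := (((hplus 1 (by norm_num) t ht).sub (hminus 1 (by norm_num) t ht)).const_mul
        (1/3 : ℝ)).sub
      ((((hasDerivAt_id t).div_const 3).mul
        ((hplus 2 (by norm_num) t ht).add (hminus 2 (by norm_num) t ht))))
    refine this.congr_deriv ?_
    simp only [id, Pi.add_apply, Pi.sub_apply]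
    ring
  -- Lipschitz bound on the third derivative
  have hg3 : ∀ t ∈ Set.Icc 0 h, |g 3 (c + t) - g 3 (c - t)| ≤ M * (2 * t) := by
    intro t ht
    have key := Convex.norm_image_sub_le_of_norm_hasDerivWithin_le
      (f := g 3) (f' := g 4) (C := M)
      (fun y hy => gdW 3 (by norm_num) y hy)
      (fun y hy => by rw [Real.norm_eq_abs, hgdef]; exact hM y hy)
      (convex_Icc a b) (hmem t ht).2 (hmem t ht).1
    rw [Real.norm_eq_abs, Real.norm_eq_abs] at key
    have habs : |(c + t) - (c - t)| = 2 * t := by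
      rw [show (c + t) - (c - t) = 2 * t by ring, abs_of_nonneg (by linarith [ht.1])]
    rw [habs] at key
    exact key
  -- chain the bounds
  have hb2 : ∀ t ∈ Set.Icc 0 h, |1/3 * (g 1 (c + t) - g 1 (c - t))
      - t/3 * (g 2 (c + t) + g 2 (c - t))| ≤ 2/9 * M * t ^ 3 := by
    apply simpson_bound_aux hh _ _ _ (fun t => 2/3 * M * t ^ 2) hF2cont
      ((continuous_const.mul (continuous_pow 3)).continuousOn) hF2d
    · intro t ht
      have := (hasDerivAt_pow 3 t).const_mul (2/9 * M)
      refine this.congr_deriv ?_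
      push_cast; ring
    · intro t ht
      have h1 := hg3 t (Set.Ioo_subset_Icc_self ht)
      have ht0 : (0:ℝ) ≤ t / 3 := by linarith [ht.1]
      rw [abs_neg, abs_mul, abs_of_nonneg ht0]
      calc t / 3 * |g 3 (c + t) - g 3 (c - t)| ≤ t / 3 * (M * (2 * t)) := by
            apply mul_le_mul_of_nonneg_left h1 ht0
        _ = 2/3 * M * t ^ 2 := by ring
    · simp
    · simp
  have hb1 : ∀ t ∈ Set.Icc 0 h, |2/3 * (f (c + t) + f (c - t)) - 4/3 * f c
      - t/3 * (g 1 (c + t) - g 1 (c - t))| ≤ 1/18 * M * t ^ 4 := by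
    apply simpson_bound_aux hh _ _ _ (fun t => 2/9 * M * t ^ 3) hF1cont
      ((continuous_const.mul (continuous_pow 4)).continuousOn) hF1d
    · intro t ht
      have := (hasDerivAt_pow 4 t).const_mul (1/18 * M)
      refine this.congr_deriv ?_
      push_cast; ring
    · exact fun t ht => hb2 t (Set.Ioo_subset_Icc_self ht)
    · simp; ring
    · simp
  have hb0 : ∀ t ∈ Set.Icc 0 h, |(∫ y in (c - t)..(c + t), f y)
      - t / 3 * (f (c - t) + 4 * f c + f (c + t))| ≤ 1/90 * M * t ^ 5 := by
    apply simpson_bound_aux hh _ _ _ (fun t => 1/18 * M * t ^ 4) hFcont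
      ((continuous_const.mul (continuous_pow 5)).continuousOn) hFd
    · intro t ht
      have := (hasDerivAt_pow 5 t).const_mul (1/90 * M)
      refine this.congr_deriv ?_
      push_cast; ring
    · exact fun t ht => hb1 t (Set.Ioo_subset_Icc_self ht)
    · simp
    · simp
  have := hb0 h (Set.right_mem_Icc.2 hh.le)
  calc |(∫ y in (c - h)..(c + h), f y) - h / 3 * (f (c - h) + 4 * f c + f (c + h))|
      ≤ 1/90 * M * h ^ 5 := this
    _ = M * h ^ 5 / 90 := by ring

/-- Error bound for the composite Simpson rule with an even number `N` of subintervals: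
if `f` is four times continuously differentiable on `[a,b]` with fourth derivative bounded
by `M` there, then the composite Simpson approximation has error at most
`M (b-a)^5 / (180 N^4)`; in particular the error is `O(N^{-4})`. -/
theorem composite_simpson_error_bound
    (a b : ℝ) (hab : a < b) (N : ℕ) (hN2 : 2 ≤ N) (hNeven : Even N)
    (x : ℕ → ℝ) (hx : ∀ k, x k = a + k * (b - a) / N)
    (f : ℝ → ℝ) (M : ℝ)
    (hf : ContDiffOn ℝ 4 f (Set.Icc a b))
    (hM : ∀ y ∈ Set.Icc a b, |iteratedDerivWithin 4 f (Set.Icc a b) y| ≤ M) :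
    |(∫ y in a..b, f y) -
        ∑ ℓ ∈ Finset.range (N / 2),
          ((b - a) / (3 * N)) * (f (x (2 * ℓ)) + 4 * f (x (2 * ℓ + 1)) + f (x (2 * ℓ + 2)))|
      ≤ M * (b - a) ^ 5 / (180 * N ^ 4) := by
  obtain ⟨n, hn⟩ := hNeven
  have hn2 : N = 2 * n := by omega
  have hnd : N / 2 = n := by omega
  have hn1 : 1 ≤ n := by omega
  have hN0 : (0:ℝ) < N := by
    have : 0 < N := by omega
    exact_mod_cast this
  set h0 : ℝ := (b - a) / N with hh0def
  have hh0 : 0 < h0 := div_pos (by linarith) hN0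
  have hx' : ∀ k : ℕ, x k = a + k * h0 := fun k => by rw [hx k, hh0def]; ring
  have hNh : (N:ℝ) * h0 = b - a := by
    rw [hh0def]; field_simp
  have hxmem : ∀ k : ℕ, k ≤ N → x k ∈ Set.Icc a b := by
    intro k hk
    have hk' : (k:ℝ) ≤ N := by exact_mod_cast hk
    have h1 : 0 ≤ (k:ℝ) * h0 := mul_nonneg (Nat.cast_nonneg k) hh0.le
    have h2 : (k:ℝ) * h0 ≤ N * h0 := mul_le_mul_of_nonneg_right hk' hh0.le
    rw [hx', Set.mem_Icc]
    constructor <;> linarith [hNh]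
  have hxle : ∀ j k : ℕ, j ≤ k → x j ≤ x k := by
    intro j k hjk
    rw [hx', hx']
    have : (j:ℝ) ≤ k := by exact_mod_cast hjk
    nlinarith [hh0]
  have hint : ∀ k, k < n → IntervalIntegrable f volume (x (2*k)) (x (2*(k+1))) := by
    intro k hk
    apply ContinuousOn.intervalIntegrable
    apply hf.continuousOn.mono
    have h1 := hxmem (2*k) (by omega)
    have h2 := hxmem (2*(k+1)) (by omega)
    calc Set.uIcc (x (2*k)) (x (2*(k+1))) ⊆ Set.uIcc a b :=
          Set.uIcc_subset_uIcc (by rw [Set.uIcc_of_le hab.le]; exact h1)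
            (by rw [Set.uIcc_of_le hab.le]; exact h2)
      _ = Set.Icc a b := Set.uIcc_of_le hab.le
  have hsum : (∫ y in a..b, f y)
      = ∑ ℓ ∈ Finset.range n, ∫ y in (x (2*ℓ))..(x (2*ℓ+2)), f y := by
    have := intervalIntegral.sum_integral_adjacent_intervals
      (a := fun ℓ => x (2*ℓ)) (n := n) (f := f) (μ := volume) hint
    have hx0 : x (2*0) = a := by rw [hx']; simp
    have hxn : x (2*n) = b := by
      rw [hx']
      have : ((2*n : ℕ):ℝ) * h0 = b - a := by
        rw [← hNh]; congr 1; exact_mod_cast hn2.symm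
      linarith [this]
    rw [hx0, hxn] at this
    exact this.symm
  rw [hnd, hsum, ← Finset.sum_sub_distrib]
  have hterm : ∀ ℓ ∈ Finset.range n,
      |(∫ y in (x (2*ℓ))..(x (2*ℓ+2)), f y)
        - ((b - a) / (3 * N)) * (f (x (2*ℓ)) + 4 * f (x (2*ℓ+1)) + f (x (2*ℓ+2)))|
      ≤ M * h0 ^ 5 / 90 := by
    intro ℓ hℓ
    rw [Finset.mem_range] at hℓ
    have e1 : x (2*ℓ+1) - h0 = x (2*ℓ) := by
      rw [hx', hx']; push_cast; ring
    have e2 : x (2*ℓ+1) + h0 = x (2*ℓ+2) := by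
      rw [hx', hx']; push_cast; ring
    have hsub : Set.Icc (x (2*ℓ+1) - h0) (x (2*ℓ+1) + h0) ⊆ Set.Icc a b := by
      rw [e1, e2]
      exact Set.Icc_subset_Icc (hxmem (2*ℓ) (by omega)).1 (hxmem (2*ℓ+2) (by omega)).2
    have hc := simpson_single a b f M hf hM (x (2*ℓ+1)) h0 hh0 hsub
    rw [e1, e2] at hc
    have e3 : (b - a) / (3 * N) = h0 / 3 := by rw [hh0def]; ring
    rw [e3]
    exact hc
  calc |∑ ℓ ∈ Finset.range n, ((∫ y in (x (2*ℓ))..(x (2*ℓ+2)), f y)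
        - ((b - a) / (3 * N)) * (f (x (2*ℓ)) + 4 * f (x (2*ℓ+1)) + f (x (2*ℓ+2))))|
      ≤ ∑ ℓ ∈ Finset.range n, |(∫ y in (x (2*ℓ))..(x (2*ℓ+2)), f y)
        - ((b - a) / (3 * N)) * (f (x (2*ℓ)) + 4 * f (x (2*ℓ+1)) + f (x (2*ℓ+2)))| :=
        Finset.abs_sum_le_sum_abs _ _
    _ ≤ ∑ _ℓ ∈ Finset.range n, M * h0 ^ 5 / 90 := Finset.sum_le_sum hterm
    _ = n * (M * h0 ^ 5 / 90) := by
        rw [Finset.sum_const, Finset.card_range, nsmul_eq_mul]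
    _ = M * (b - a) ^ 5 / (180 * N ^ 4) := by
        have hcast : (N:ℝ) = 2 * n := by exact_mod_cast hn2
        have hnne : (n:ℝ) ≠ 0 := by
          have : 0 < n := hn1
          exact_mod_cast this.ne'
        rw [hh0def, hcast]
        field_simp
        ring
end

section
/- Let T be a full rooted binary tree (every internal node has exactly two children), with root density f_r : ℝ → ℝ nonnegative and measurable, with each non-root node i carrying a nonnegative measurable transition kernel f_i : ℝ × ℝ → ℝ (jointly measurable, with f_i(x̃, x) the density of the value x̃ at node i given value x at its parent), and with each leaf i carrying a nonnegative measurable observation function π_i : ℝ → ℝ. Define the partial likelihood 𝓕_i : ℝ → ℝ≥0∞ recursively: if node i is a leaf, 𝓕_i(x) = ∫ f_i(x̃, x)·π_i(x̃) dx̃; if node i is internal with children u and v, 𝓕_i(x) = ∫ f_i(x̃, x)·𝓕_u(x̃)·𝓕_v(x̃) dx̃ (Lebesgue integrals over ℝ of nonnegative functions). Then, when the root has children u and v, the quantity ∫ f_r(x)·𝓕_u(x)·𝓕_v(x) dx equals the iterated integral over all node variables (x_i for every node i of T) of the product f_r(x_root) · ∏_{non-root nodes i} f_i(x_i, x_{parent(i)})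 · ∏_{leaves i} π_i(x_i). That is, the pruning recursion computes exactly the multidimensional marginalized likelihood integral. -/
open MeasureTheory
open scoped ENNReal

/-- A (subtree of a) full rooted binary tree hanging below an edge of the phylogeny.
Each node carries the transition kernel `k : ℝ → ℝ → ℝ` of the branch above it, where
`k xt x` is the density of the value `xt` at the node given value `x` at its parent;
each leaf additionally carries an observation function `obs : ℝ → ℝ`. -/
inductive PhyloTree where
  | leaf (k : ℝ → ℝ → ℝ) (obs : ℝ → ℝ) : PhyloTree
  | node (k : ℝ → ℝ → ℝ) (l r : PhyloTree) : PhyloTree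

/-- All the data carried by the tree is measurable and nonnegative. -/
def PhyloTree.Valid : PhyloTree → Prop
  | .leaf k obs => Measurable (Function.uncurry k) ∧ (∀ xt x, 0 ≤ k xt x) ∧
      Measurable obs ∧ (∀ xt, 0 ≤ obs xt)
  | .node k l r => Measurable (Function.uncurry k) ∧ (∀ xt x, 0 ≤ k xt x) ∧
      l.Valid ∧ r.Valid

/-- The partial likelihood `𝓕_i(x)` of a subtree, given value `x` at the parent of its top
node, defined by the pruning recursion: at a leaf, `𝓕(x) = ∫ k(xt, x)·π(xt) dxt`, and at an
internal node with children `u, v`, `𝓕(x) = ∫ k(xt, x)·𝓕_u(xt)·𝓕_v(xt) dxt`. -/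
noncomputable def PhyloTree.partialLik : PhyloTree → ℝ → ℝ≥0∞
  | .leaf k obs => fun x => ∫⁻ xt, ENNReal.ofReal (k xt x) * ENNReal.ofReal (obs xt)
  | .node k l r => fun x => ∫⁻ xt, ENNReal.ofReal (k xt x) * l.partialLik xt * r.partialLik xt

/-- The space of assignments of a real value to every node of the subtree. -/
def PhyloTree.Vars : PhyloTree → Type
  | .leaf _ _ => ℝ
  | .node _ l r => ℝ × l.Vars × r.Vars

/-- The natural measurable-space structure on assignments. -/
def PhyloTree.varsMeasurableSpace : (t : PhyloTree) → MeasurableSpace t.Vars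
  | .leaf _ _ => (inferInstance : MeasurableSpace ℝ)
  | .node _ l r =>
      @Prod.instMeasurableSpace _ _ (inferInstance : MeasurableSpace ℝ)
        (@Prod.instMeasurableSpace _ _ l.varsMeasurableSpace r.varsMeasurableSpace)

attribute [instance] PhyloTree.varsMeasurableSpace

/-- Lebesgue measure on the space of assignments: one copy of Lebesgue measure on ℝ for
each node of the subtree. -/
noncomputable def PhyloTree.varsMeasure : (t : PhyloTree) → Measure t.Vars
  | .leaf _ _ => (volume : Measure ℝ)
  | .node _ l r => (volume : Measure ℝ).prod (l.varsMeasure.prod r.varsMeasure)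

/-- The joint density of an assignment of values to all nodes of the subtree, given value
`x` at the parent of its top node: the product of all transition kernels along the branches
of the subtree and the observation functions at its leaves. -/
noncomputable def PhyloTree.density : (t : PhyloTree) → t.Vars → ℝ → ℝ≥0∞
  | .leaf k obs => fun xt x => ENNReal.ofReal (k xt x) * ENNReal.ofReal (obs xt)
  | .node k l r => fun y x =>
      ENNReal.ofReal (k y.1 x) * l.density y.2.1 y.1 * r.density y.2.2 y.1

instance PhyloTree.sigmaFiniteVarsMeasure : (t : PhyloTree) → SigmaFinite t.varsMeasure
  | .leaf _ _ => inferInstanceAs (SigmaFinite (volume : Measure ℝ))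
  | .node _ l r =>
      have := l.sigmaFiniteVarsMeasure
      have := r.sigmaFiniteVarsMeasure
      inferInstanceAs (SigmaFinite ((volume : Measure ℝ).prod (l.varsMeasure.prod r.varsMeasure)))

lemma PhyloTree.density_measurable :
    ∀ t : PhyloTree, t.Valid → Measurable (fun p : t.Vars × ℝ => t.density p.1 p.2)
  | .leaf k obs => by
    rintro ⟨hk, _, hobs, _⟩
    exact hk.ennreal_ofReal.mul ((hobs.comp measurable_fst).ennreal_ofReal)
  | .node k l r => by
    rintro ⟨hk, _, hl, hr⟩
    have Ml := l.density_measurable hl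
    have Mr := r.density_measurable hr
    have h1 : Measurable (fun p : (ℝ × l.Vars × r.Vars) × ℝ => ENNReal.ofReal (k p.1.1 p.2)) :=
      (hk.comp ((measurable_fst.fst).prodMk measurable_snd)).ennreal_ofReal
    have h2 : Measurable (fun p : (ℝ × l.Vars × r.Vars) × ℝ => l.density p.1.2.1 p.1.1) :=
      Ml.comp ((measurable_fst.snd.fst).prodMk measurable_fst.fst)
    have h3 : Measurable (fun p : (ℝ × l.Vars × r.Vars) × ℝ => r.density p.1.2.2 p.1.1) :=
      Mr.comp ((measurable_fst.snd.snd).prodMk measurable_fst.fst)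
    exact (h1.mul h2).mul h3

lemma PhyloTree.density_measurable' (t : PhyloTree) (ht : t.Valid) (x : ℝ) :
    Measurable (fun y : t.Vars => t.density y x) :=
  (t.density_measurable ht).comp (measurable_id.prodMk measurable_const)

lemma PhyloTree.partialLik_eq_lintegral_density :
    ∀ t : PhyloTree, t.Valid → ∀ x : ℝ, t.partialLik x = ∫⁻ y, t.density y x ∂t.varsMeasure
  | .leaf k obs => by intro _ x; rfl
  | .node k l r => by
    rintro ⟨hk, hk0, hl, hr⟩ x
    have Ml := l.density_measurable hl
    have Mr := r.density_measurable hr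
    have : SigmaFinite l.varsMeasure := l.sigmaFiniteVarsMeasure
    have : SigmaFinite r.varsMeasure := r.sigmaFiniteVarsMeasure
    show (∫⁻ xt, ENNReal.ofReal (k xt x) * l.partialLik xt * r.partialLik xt)
        = ∫⁻ y, (ENNReal.ofReal (k y.1 x) * l.density y.2.1 y.1 * r.density y.2.2 y.1)
            ∂((volume : Measure ℝ).prod (l.varsMeasure.prod r.varsMeasure))
    rw [MeasureTheory.lintegral_prod]
    · refine lintegral_congr fun xt => ?_
      rw [MeasureTheory.lintegral_prod]
      · have : (∫⁻ yl, ∫⁻ yr, ENNReal.ofReal (k xt x) * l.density yl xt * r.density yr xt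
              ∂r.varsMeasure ∂l.varsMeasure)
            = ∫⁻ yl, (ENNReal.ofReal (k xt x) * l.density yl xt) * ∫⁻ yr, r.density yr xt
              ∂r.varsMeasure ∂l.varsMeasure := by
          refine lintegral_congr fun yl => ?_
          rw [lintegral_const_mul'' _ ((r.density_measurable' hr xt).aemeasurable)]
        rw [this]
        have h2 : (fun yl => (ENNReal.ofReal (k xt x) * l.density yl xt)
              * ∫⁻ yr, r.density yr xt ∂r.varsMeasure)
            = fun yl => (ENNReal.ofReal (k xt x) * ∫⁻ yr, r.density yr xt ∂r.varsMeasure)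
              * l.density yl xt := by
          funext yl; ring
        rw [h2, lintegral_const_mul'' _ ((l.density_measurable' hl xt).aemeasurable),
          l.partialLik_eq_lintegral_density hl xt, r.partialLik_eq_lintegral_density hr xt]
        ring
      · refine Measurable.aemeasurable ?_
        show Measurable fun y : l.Vars × r.Vars =>
          ENNReal.ofReal (k xt x) * l.density y.1 xt * r.density y.2 xt
        exact (measurable_const.mul
            ((l.density_measurable' hl xt).comp measurable_fst)).mul
            ((r.density_measurable' hr xt).comp measurable_snd)
    · exact ((PhyloTree.node k l r).density_measurable' ⟨hk, hk0, hl, hr⟩ x).aemeasurable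

/-- Felsenstein-style pruning computes exactly the marginalized likelihood: for a root with
density `f_r` and child subtrees `u` and `v` (all data nonnegative and measurable), the
single integral `∫ f_r(x)·𝓕_u(x)·𝓕_v(x) dx` of the pruning recursion equals the iterated
integral, over the values at all nodes of the tree, of the product of the root density, all
transition kernels, and all leaf observation functions. -/
theorem pruning_computes_marginal_likelihood
    (fr : ℝ → ℝ) (hfr : Measurable fr) (hfr0 : ∀ x, 0 ≤ fr x)
    (u v : PhyloTree) (hu : u.Valid) (hv : v.Valid) :
    (∫⁻ x, ENNReal.ofReal (fr x) * u.partialLik x * v.partialLik x)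
      = ∫⁻ x, ∫⁻ yu, ∫⁻ yv,
          ENNReal.ofReal (fr x) * u.density yu x * v.density yv x
            ∂v.varsMeasure ∂u.varsMeasure ∂(volume : Measure ℝ) := by
  refine lintegral_congr fun x => ?_
  have hinner : (∫⁻ yu, ∫⁻ yv,
        ENNReal.ofReal (fr x) * u.density yu x * v.density yv x ∂v.varsMeasure ∂u.varsMeasure)
      = ∫⁻ yu, (ENNReal.ofReal (fr x) * ∫⁻ yv, v.density yv x ∂v.varsMeasure)
          * u.density yu x ∂u.varsMeasure := by
    refine lintegral_congr fun yu => ?_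
    rw [lintegral_const_mul'' _ ((v.density_measurable' hv x).aemeasurable)]
    ring
  rw [hinner, lintegral_const_mul'' _ ((u.density_measurable' hu x).aemeasurable),
    u.partialLik_eq_lintegral_density hu x, v.partialLik_eq_lintegral_density hv x]
  ring
end

section
/- Let a < b, let N be a positive natural number, let X_0, …, X_N ∈ [a,b] be quadrature points, and let w_0, …, w_N ≥ 0 be quadrature weights. Let K : ℝ → ℝ be a nonnegative measurable kernel with ((b−a)/N)·∑_{ℓ=0}^{N} w_ℓ·K(X_ℓ) ≤ C. Let 𝓕_u, 𝓕_v : ℝ → ℝ satisfy 0 ≤ 𝓕_u(x̃) ≤ 1 and 0 ≤ 𝓕_v(x̃) ≤ 1 for all x̃ ∈ [a,b], and let F_u, F_v : {0,…,N} → ℝ satisfy 0 ≤ F_u[ℓ] ≤ 1, 0 ≤ F_v[ℓ] ≤ 1, |F_u[ℓ] − 𝓕_u(X_ℓ)| ≤ ε_u and |F_v[ℓ] − 𝓕_v(X_ℓ)| ≤ ε_v for all ℓ. Suppose moreover that the quadrature rule applied to the exact integrand has error at most δ, i.e. |((b−a)/N)·∑_{ℓ=0}^{N} w_ℓ·K(X_ℓ)·𝓕_u(X_ℓ)·𝓕_v(X_ℓ)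 − ∫_a^b K(x̃)·𝓕_u(x̃)·𝓕_v(x̃) dx̃| ≤ δ. Then |((b−a)/N)·∑_{ℓ=0}^{N} w_ℓ·K(X_ℓ)·F_u[ℓ]·F_v[ℓ] − ∫_a^b K(x̃)·𝓕_u(x̃)·𝓕_v(x̃) dx̃| ≤ C·(ε_u + ε_v) + δ. (This is the error-propagation step in the induction proving that the dynamic-programming quadrature algorithm on a phylogeny accumulates only additive errors across nodes.) -/
open MeasureTheory Finset

/-- Error propagation step for the dynamic-programming quadrature algorithm: if a
quadrature rule with nonnegative weights applied to the kernel has total weight at most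
`C`, the exact partial likelihoods `𝓕_u, 𝓕_v` take values in `[0,1]` on `[a,b]`, the stored
arrays `F_u, F_v` take values in `[0,1]` and approximate `𝓕_u, 𝓕_v` at the quadrature
points with errors `ε_u, ε_v`, and the quadrature rule applied to the exact integrand has
error at most `δ`, then the quadrature sum computed from the stored arrays approximates the
exact integral with error at most `C·(ε_u + ε_v) + δ`. -/
theorem quadrature_error_propagation
    (a b : ℝ) (hab : a < b) (N : ℕ) (hN : 0 < N)
    (X : Fin (N + 1) → ℝ) (hX : ∀ ℓ, X ℓ ∈ Set.Icc a b)
    (w : Fin (N + 1) → ℝ) (hw : ∀ ℓ, 0 ≤ w ℓ)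
    (K : ℝ → ℝ) (hKmeas : Measurable K) (hK0 : ∀ x, 0 ≤ K x)
    (C : ℝ) (hC : ((b - a) / N) * ∑ ℓ, w ℓ * K (X ℓ) ≤ C)
    (Fu Fv : ℝ → ℝ)
    (hFu0 : ∀ x ∈ Set.Icc a b, 0 ≤ Fu x) (hFu1 : ∀ x ∈ Set.Icc a b, Fu x ≤ 1)
    (hFv0 : ∀ x ∈ Set.Icc a b, 0 ≤ Fv x) (hFv1 : ∀ x ∈ Set.Icc a b, Fv x ≤ 1)
    (Au Av : Fin (N + 1) → ℝ)
    (hAu0 : ∀ ℓ, 0 ≤ Au ℓ) (hAu1 : ∀ ℓ, Au ℓ ≤ 1)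
    (hAv0 : ∀ ℓ, 0 ≤ Av ℓ) (hAv1 : ∀ ℓ, Av ℓ ≤ 1)
    (εu εv : ℝ)
    (hεu : ∀ ℓ, |Au ℓ - Fu (X ℓ)| ≤ εu) (hεv : ∀ ℓ, |Av ℓ - Fv (X ℓ)| ≤ εv)
    (δ : ℝ)
    (hδ : |((b - a) / N) * (∑ ℓ, w ℓ * K (X ℓ) * Fu (X ℓ) * Fv (X ℓ))
            - ∫ x in Set.Icc a b, K x * Fu x * Fv x| ≤ δ) :
    |((b - a) / N) * (∑ ℓ, w ℓ * K (X ℓ) * Au ℓ * Av ℓ)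
        - ∫ x in Set.Icc a b, K x * Fu x * Fv x|
      ≤ C * (εu + εv) + δ := by
  have hcoef : (0:ℝ) ≤ (b - a) / N := div_nonneg (by linarith) (Nat.cast_nonneg N)
  have hε : (0:ℝ) ≤ εu + εv := by
    have h1 := (abs_nonneg _).trans (hεu ⟨0, Nat.succ_pos N⟩)
    have h2 := (abs_nonneg _).trans (hεv ⟨0, Nat.succ_pos N⟩)
    linarith
  have hterm : ∀ ℓ : Fin (N+1),
      |w ℓ * K (X ℓ) * Au ℓ * Av ℓ - w ℓ * K (X ℓ) * Fu (X ℓ) * Fv (X ℓ)|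
        ≤ w ℓ * K (X ℓ) * (εu + εv) := by
    intro ℓ
    have hXl := hX ℓ
    have hfu0 := hFu0 _ hXl; have hfu1 := hFu1 _ hXl
    have hfv0 := hFv0 _ hXl; have hfv1 := hFv1 _ hXl
    have h2 : |Au ℓ * Av ℓ - Fu (X ℓ) * Fv (X ℓ)| ≤ εu + εv := by
      have h1 : Au ℓ * Av ℓ - Fu (X ℓ) * Fv (X ℓ)
          = (Au ℓ - Fu (X ℓ)) * Av ℓ + Fu (X ℓ) * (Av ℓ - Fv (X ℓ)) := by ring
      rw [h1]
      calc |(Au ℓ - Fu (X ℓ)) * Av ℓ + Fu (X ℓ) * (Av ℓ - Fv (X ℓ))|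
          ≤ |(Au ℓ - Fu (X ℓ)) * Av ℓ| + |Fu (X ℓ) * (Av ℓ - Fv (X ℓ))| := abs_add_le _ _
        _ ≤ εu + εv := by
            rw [abs_mul, abs_mul, abs_of_nonneg (hAv0 ℓ), abs_of_nonneg hfu0]
            have h3 : |Au ℓ - Fu (X ℓ)| * Av ℓ ≤ εu * 1 :=
              mul_le_mul (hεu ℓ) (hAv1 ℓ) (hAv0 ℓ) ((abs_nonneg _).trans (hεu ℓ))
            have h4 : Fu (X ℓ) * |Av ℓ - Fv (X ℓ)| ≤ 1 * εv :=
              mul_le_mul hfu1 (hεv ℓ) (abs_nonneg _) zero_le_one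
            linarith
    have hwK : 0 ≤ w ℓ * K (X ℓ) := mul_nonneg (hw ℓ) (hK0 _)
    calc |w ℓ * K (X ℓ) * Au ℓ * Av ℓ - w ℓ * K (X ℓ) * Fu (X ℓ) * Fv (X ℓ)|
        = w ℓ * K (X ℓ) * |Au ℓ * Av ℓ - Fu (X ℓ) * Fv (X ℓ)| := by
          have heq : w ℓ * K (X ℓ) * Au ℓ * Av ℓ - w ℓ * K (X ℓ) * Fu (X ℓ) * Fv (X ℓ)
              = w ℓ * K (X ℓ) * (Au ℓ * Av ℓ - Fu (X ℓ) * Fv (X ℓ)) := by ring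
          rw [heq, abs_mul, abs_of_nonneg hwK]
      _ ≤ w ℓ * K (X ℓ) * (εu + εv) := by gcongr
  have hstep : |((b - a) / N) * (∑ ℓ, w ℓ * K (X ℓ) * Au ℓ * Av ℓ)
      - ((b - a) / N) * (∑ ℓ, w ℓ * K (X ℓ) * Fu (X ℓ) * Fv (X ℓ))| ≤ C * (εu + εv) := by
    rw [← mul_sub, ← Finset.sum_sub_distrib, abs_mul, abs_of_nonneg hcoef]
    calc (b - a) / N * |∑ ℓ, (w ℓ * K (X ℓ) * Au ℓ * Av ℓ - w ℓ * K (X ℓ) * Fu (X ℓ) * Fv (X ℓ))|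
        ≤ (b - a) / N * ∑ ℓ, |w ℓ * K (X ℓ) * Au ℓ * Av ℓ - w ℓ * K (X ℓ) * Fu (X ℓ) * Fv (X ℓ)| := by
          gcongr; exact Finset.abs_sum_le_sum_abs _ _
      _ ≤ (b - a) / N * ∑ ℓ, w ℓ * K (X ℓ) * (εu + εv) := by
          gcongr with ℓ _; exact hterm ℓ
      _ = ((b - a) / N * ∑ ℓ, w ℓ * K (X ℓ)) * (εu + εv) := by
          rw [← Finset.sum_mul]; ring
      _ ≤ C * (εu + εv) := by gcongr
  calc |((b - a) / N) * (∑ ℓ, w ℓ * K (X ℓ) * Au ℓ * Av ℓ)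
        - ∫ x in Set.Icc a b, K x * Fu x * Fv x|
      ≤ |((b - a) / N) * (∑ ℓ, w ℓ * K (X ℓ) * Au ℓ * Av ℓ)
          - ((b - a) / N) * (∑ ℓ, w ℓ * K (X ℓ) * Fu (X ℓ) * Fv (X ℓ))|
        + |((b - a) / N) * (∑ ℓ, w ℓ * K (X ℓ) * Fu (X ℓ) * Fv (X ℓ))
          - ∫ x in Set.Icc a b, K x * Fu x * Fv x| := abs_sub_le _ _ _
    _ ≤ C * (εu + εv) + δ := add_le_add hstep hδ
end
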